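/- arXiv:0912.4940 — 2 statements merged into one kernel-verified Lean document; each statement's English description precedes it below -/
import Mathlib

section
/- Let 𝔥 be a real Lie algebra, let f : 𝔥 → gl(V) be a representation on a nonzero finite-dimensional real vector space V such that (f, V) is irreducible, and let E ∈ 𝔥 be a central element such that f(E) has no real eigenvalue. Then there exist real numbers a, b with b ≠ 0 and an ℝ-linear endomorphism J of V such that J ∘ J = −id_V, J ∘ f(X) = f(X) ∘ J for all X ∈ 𝔥, and f(E) = a·id_V + b·J. -/
attribute [local instance 100] LieRing.ofAssociativeRing

/-- If `(f, V)` is an irreducible real representation of `𝔥` on a nonzero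
finite-dimensional real vector space, `E ∈ 𝔥` is central, and `f(E)` has no real eigenvalue,
then there are `a b : ℝ` with `b ≠ 0` and a complex structure `J` on `V` commuting with all
`f(X)` such that `f(E) = a • id_V + b • J`. -/
theorem central_no_real_eigenvalue_complex_structure {H V : Type*} [LieRing H] [LieAlgebra ℝ H]
    [AddCommGroup V] [Module ℝ V] [FiniteDimensional ℝ V] [Nontrivial V]
    (f : H →ₗ⁅ℝ⁆ Module.End ℝ V)
    (hirr : ∀ W : Submodule ℝ V, (∀ X : H, ∀ v ∈ W, f X v ∈ W) → W = ⊥ ∨ W = ⊤)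
    (E : H) (hE : ∀ X : H, ⁅E, X⁆ = 0)
    (hnoeig : ∀ a : ℝ, ¬ Module.End.HasEigenvalue (f E) a) :
    ∃ (a b : ℝ) (J : Module.End ℝ V), b ≠ 0 ∧ J * J = -1 ∧
      (∀ X : H, J * f X = f X * J) ∧ f E = a • (1 : Module.End ℝ V) + b • J := by
  set T := f E with hT
  -- T commutes with every f X
  have hcomm : ∀ X : H, T * f X = f X * T := by
    intro X
    have h := f.map_lie (x := E) (y := X)
    rw [hE X] at h
    have h0 : f (0 : H) = 0 := by
      have := f.toLinearMap.map_zero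
      simpa using this
    rw [h0] at h
    have h2 : (0 : Module.End ℝ V) = T * f X - f X * T := by
      rw [h]; rw [Ring.lie_def]
    have := sub_eq_zero.mp h2.symm
    exact this
  -- minimal polynomial
  have hint : IsIntegral ℝ T := Algebra.IsIntegral.isIntegral T
  set P := minpoly ℝ T with hP
  have hPm : P.Monic := minpoly.monic hint
  have hPne : P ≠ 0 := hPm.ne_zero
  have hProot : ∀ x : ℝ, ¬ P.IsRoot x := by
    intro x hx
    exact hnoeig x ((Module.End.hasEigenvalue_iff_isRoot (f := T)).2 hx)
  -- irreducible monic factor q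
  have hPnu : ¬ IsUnit P := by
    intro hu
    have hdeg := Polynomial.natDegree_eq_zero_of_isUnit hu
    exact (minpoly.natDegree_pos hint).ne' hdeg
  obtain ⟨q, hqm, hqirr, hqdvd⟩ := P.exists_monic_irreducible_factor hPnu
  have hqroot : ∀ x : ℝ, ¬ q.IsRoot x := by
    intro x hx
    exact hProot x (hx.dvd hqdvd)
  have hqd1 : q.natDegree ≠ 1 := by
    intro h1
    apply hqroot (-(q.coeff 0))
    rw [hqm.eq_X_add_C h1]
    simp
  have hqdpos : 0 < q.natDegree := hqirr.natDegree_pos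
  have hqd2 : q.natDegree = 2 := by
    have := hqirr.natDegree_le_two
    omega
  set c := q.coeff 1 with hc
  set d := q.coeff 0 with hd
  have hq2 : q = Polynomial.X ^ 2 + Polynomial.C c * Polynomial.X + Polynomial.C d := by
    have h3 : q.natDegree < 3 := by omega
    have hcoef2 : q.coeff 2 = 1 := by
      have := hqm.coeff_natDegree; rwa [hqd2] at this
    conv_lhs => rw [q.as_sum_range' 3 h3]
    simp [Finset.sum_range_succ, hcoef2, ← Polynomial.C_mul_X_pow_eq_monomial]
    ring
  -- discriminant is negative
  have hdisc : c ^ 2 / 4 - d < 0 := by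
    by_contra h
    push_neg at h
    apply hqroot (-c / 2 + Real.sqrt (c ^ 2 / 4 - d))
    have hs : Real.sqrt (c ^ 2 / 4 - d) ^ 2 = c ^ 2 / 4 - d := Real.sq_sqrt h
    simp only [Polynomial.IsRoot, hq2, Polynomial.eval_add, Polynomial.eval_mul,
      Polynomial.eval_pow, Polynomial.eval_X, Polynomial.eval_C]
    linear_combination hs
  set b : ℝ := Real.sqrt (d - c ^ 2 / 4) with hb
  have hbpos : 0 < b := Real.sqrt_pos.2 (by linarith)
  have hbsq : b ^ 2 = d - c ^ 2 / 4 := Real.sq_sqrt (by linarith)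
  -- aeval T q
  have haeval : Polynomial.aeval T q = T * T + c • T + d • (1 : Module.End ℝ V) := by
    rw [hq2, map_add, map_add, map_mul, map_pow, Polynomial.aeval_X, Polynomial.aeval_C,
      Polynomial.aeval_C, sq, Algebra.algebraMap_eq_smul_one, Algebra.algebraMap_eq_smul_one,
      smul_mul_assoc, one_mul]
  -- kernel of q(T) is nonzero and invariant
  obtain ⟨r, hr⟩ := hqdvd
  have hrne : r ≠ 0 := by rintro rfl; simp at hr; exact hPne hr
  have hqne : q ≠ 0 := hqm.ne_zero
  have hrdeg : r.natDegree < P.natDegree := by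
    have := Polynomial.natDegree_mul hqne hrne
    rw [← hr] at this
    omega
  have hrT : Polynomial.aeval T r ≠ 0 := by
    intro h0
    have hdvd := minpoly.dvd ℝ T h0
    rw [← hP] at hdvd
    have := Polynomial.natDegree_le_of_dvd hdvd hrne
    omega
  have hker : LinearMap.ker (Polynomial.aeval T q) ≠ ⊥ := by
    intro hbot
    apply hrT
    ext v
    have h1 : Polynomial.aeval T q (Polynomial.aeval T r v) = 0 := by
      have : Polynomial.aeval T q * Polynomial.aeval T r = 0 := by
        rw [← map_mul, ← hr, hP]
        exact minpoly.aeval ℝ T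
      calc Polynomial.aeval T q (Polynomial.aeval T r v)
          = (Polynomial.aeval T q * Polynomial.aeval T r) v := rfl
        _ = 0 := by rw [this]; rfl
    have : Polynomial.aeval T r v ∈ LinearMap.ker (Polynomial.aeval T q) := h1
    rw [hbot] at this
    simpa using this
  have hinv : ∀ X : H, ∀ v ∈ LinearMap.ker (Polynomial.aeval T q), f X v ∈ LinearMap.ker (Polynomial.aeval T q) := by
    intro X v hv
    rw [LinearMap.mem_ker] at hv ⊢
    have h1 : Commute (f X) T := (hcomm X).symm
    have hcq : f X * Polynomial.aeval T q = Polynomial.aeval T q * f X := by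
      rw [haeval]
      exact (((h1.mul_right h1).add_right (h1.smul_right c)).add_right
        ((Commute.one_right (f X)).smul_right d))
    calc Polynomial.aeval T q (f X v) = (Polynomial.aeval T q * f X) v := rfl
      _ = (f X * Polynomial.aeval T q) v := by rw [hcq]
      _ = f X (Polynomial.aeval T q v) := rfl
      _ = 0 := by rw [hv, map_zero]
  have htop : LinearMap.ker (Polynomial.aeval T q) = ⊤ :=
    (hirr _ hinv).resolve_left hker
  have hq0 : T * T + c • T + d • (1 : Module.End ℝ V) = 0 := by
    rw [← haeval]
    ext v
    have : v ∈ LinearMap.ker (Polynomial.aeval T q) := htop ▸ Submodule.mem_top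
    simpa using this
  -- build J
  refine ⟨-c / 2, b, b⁻¹ • (T + (c / 2) • 1), hbpos.ne', ?_, ?_, ?_⟩
  · have hb2 : b⁻¹ * b⁻¹ * (d - c ^ 2 / 4) = 1 := by
      field_simp
      nlinarith [hbsq]
    have expand : (T + (c / 2) • 1) * (T + (c / 2) • 1)
        = (T * T + c • T + d • 1) - (d - c ^ 2 / 4) • (1 : Module.End ℝ V) := by
      simp only [add_mul, mul_add, smul_mul_assoc, mul_smul_comm, one_mul, mul_one,
        smul_smul, sub_smul, add_smul]
      module
    rw [smul_mul_smul_comm, expand, hq0, zero_sub, smul_neg, smul_smul, hb2]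
    simp
  · intro X
    have := hcomm X
    simp only [smul_mul_assoc, mul_smul_comm]
    congr 1
    simp only [add_mul, mul_add, smul_mul_assoc, mul_smul_comm, one_mul, mul_one, this]
  · rw [smul_smul, mul_inv_cancel₀ hbpos.ne']
    simp only [one_smul, smul_add]
    module
end

section
/- Fix integers n ≥ 2 and 1 ≤ r ≤ n−1, and let 𝔨 be the Lie subalgebra of gl(n, ℝ) consisting of all matrices whose first r columns are zero. Then there is no vector subspace 𝔪 of gl(n, ℝ) such that gl(n, ℝ) = 𝔨 ⊕ 𝔪 as vector spaces and [𝔨, 𝔪] ⊆ 𝔪; that is, the homogeneous space GL(n, ℝ)/K is not reductive. -/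
/-- The Lie subalgebra `𝔨` of `gl(n, ℝ)` of matrices whose first `r` columns vanish. -/
def glK (n r : ℕ) : Submodule ℝ (Matrix (Fin n) (Fin n) ℝ) where
  carrier := {X | ∀ (i j : Fin n), (j : ℕ) < r → X i j = 0}
  add_mem' := by
    intro X Y hX hY i j hj
    simp [Matrix.add_apply, hX i j hj, hY i j hj]
  zero_mem' := by intro i j hj; simp
  smul_mem' := by
    intro c X hX i j hj
    simp [Matrix.smul_apply, hX i j hj]

/-- Example 3.1 of the paper. For `n ≥ 2` and `1 ≤ r ≤ n − 1`, there is no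
`ad(𝔨)`-invariant vector space complement `𝔪` of `𝔨` in `gl(n, ℝ)`: the homogeneous space
`GL(n, ℝ)/K` is not reductive. -/
theorem gl_example_not_reductive (n r : ℕ) (hn : 2 ≤ n) (hr1 : 1 ≤ r) (hrn : r ≤ n - 1) :
    ¬ ∃ m : Submodule ℝ (Matrix (Fin n) (Fin n) ℝ),
        IsCompl (glK n r) m ∧ ∀ X ∈ glK n r, ∀ Y ∈ m, X * Y - Y * X ∈ m := by
  rintro ⟨𝔪, hcompl, hinv⟩
  have hn0 : 0 < n := by omega
  have hrn' : r < n := by omega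
  set a : Fin n := ⟨0, hn0⟩ with ha
  set b : Fin n := ⟨r, hrn'⟩ with hb
  have hab : a ≠ b := by
    intro h
    have : (0 : ℕ) = r := congrArg Fin.val h
    omega
  have har : (a : ℕ) < r := hr1
  -- standard basis matrices E i j
  set E : Fin n → Fin n → Matrix (Fin n) (Fin n) ℝ :=
    fun i j => Matrix.single i j (1 : ℝ) with hE
  have hEapp : ∀ i j k l, E i j k l = if i = k ∧ j = l then 1 else 0 := by
    intro i j k l
    simp [hE, Matrix.single]
  -- any E i b lies in 𝔨
  have hEk : ∀ i : Fin n, E i b ∈ glK n r := by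
    intro i k j hj
    rw [hEapp]
    have : j ≠ b := by
      intro h; rw [h] at hj; exact absurd hj (lt_irrefl _)
    simp [Ne.symm this]
  -- decompose E b a = k + m with k ∈ 𝔨, m ∈ 𝔪
  have hsup : glK n r ⊔ 𝔪 = ⊤ := codisjoint_iff.mp hcompl.codisjoint
  have hmem : E b a ∈ glK n r ⊔ 𝔪 := by rw [hsup]; trivial
  obtain ⟨k, hk, m, hm, hkm⟩ := Submodule.mem_sup.mp hmem
  -- m agrees with E b a on the first r columns
  have hmcol : ∀ i j : Fin n, (j : ℕ) < r → m i j = E b a i j := by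
    intro i j hj
    have h1 : k i j + m i j = E b a i j := by
      rw [← hkm]; simp [Matrix.add_apply]
    rw [hk i j hj] at h1
    linarith
  -- m' := [E a b, m] ∈ 𝔪
  set m' : Matrix (Fin n) (Fin n) ℝ := E a b * m - m * E a b with hm'def
  have hm' : m' ∈ 𝔪 := hinv _ (hEk a) m hm
  -- first r columns of m' agree with E a a
  have hm'col : ∀ i j : Fin n, (j : ℕ) < r → m' i j = E a a i j := by
    intro i j hj
    have hjb : j ≠ b := by
      intro h; rw [h] at hj; exact absurd hj (lt_irrefl _)
    have h2 : (m * E a b) i j = 0 :=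
      Matrix.mul_single_apply_of_ne 1 a b i j hjb m
    rcases eq_or_ne i a with hia | hia
    · subst hia
      have h1 : (E a b * m) a j = 1 * m b j :=
        Matrix.single_mul_apply_same 1 a b j m
      rw [hm'def]
      simp only [Matrix.sub_apply, h1, h2, one_mul, sub_zero]
      rw [hmcol b j hj, hEapp, hEapp]
      by_cases hja : a = j <;> simp [hja]
    · have h1 : (E a b * m) i j = 0 :=
        Matrix.single_mul_apply_of_ne 1 a b i j hia m
      rw [hm'def]
      simp only [Matrix.sub_apply, h1, h2, sub_zero]
      rw [hEapp]
      simp [Ne.symm hia]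
  have hm'aa : m' a a = 1 := by rw [hm'col a a har, hEapp]; simp
  have hm'ba : ∀ j : Fin n, (j : ℕ) < r → m' b j = 0 := by
    intro j hj
    rw [hm'col b j hj, hEapp]
    simp [hab]
  -- for every i, [E i b, m'] ∈ 𝔨 ∩ 𝔪 = 0, so E i b * m' = m' * E i b
  have hcomm : ∀ i : Fin n, E i b * m' = m' * E i b := by
    intro i
    have hZm : E i b * m' - m' * E i b ∈ 𝔪 := hinv _ (hEk i) m' hm'
    have hZk : E i b * m' - m' * E i b ∈ glK n r := by
      intro p j hj
      have hjb : j ≠ b := by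
        intro h; rw [h] at hj; exact absurd hj (lt_irrefl _)
      have h2 : (m' * E i b) p j = 0 :=
        Matrix.mul_single_apply_of_ne 1 i b p j hjb m'
      rcases eq_or_ne p i with hpi | hpi
      · subst hpi
        have h1 : (E p b * m') p j = 1 * m' b j :=
          Matrix.single_mul_apply_same 1 p b j m'
        simp [Matrix.sub_apply, h1, h2, hm'ba j hj]
      · have h1 : (E i b * m') p j = 0 :=
          Matrix.single_mul_apply_of_ne 1 i b p j hpi m'
        simp [Matrix.sub_apply, h1, h2]
    have hdisj : glK n r ⊓ 𝔪 = ⊥ := disjoint_iff.mp hcompl.disjoint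
    have : E i b * m' - m' * E i b ∈ glK n r ⊓ 𝔪 := ⟨hZk, hZm⟩
    rw [hdisj, Submodule.mem_bot] at this
    exact sub_eq_zero.mp this
  -- from commuting: m' i i = m' b b for all i
  have hdiag : ∀ i : Fin n, m' i i = m' b b := by
    intro i
    have h := congrFun (congrFun (hcomm i) i) b
    have h1 : (E i b * m') i b = 1 * m' b b :=
      Matrix.single_mul_apply_same 1 i b b m'
    have h2 : (m' * E i b) i b = m' i i * 1 :=
      Matrix.mul_single_apply_same 1 i b i m'
    rw [h1, h2] at h
    linarith
  have hbb : m' b b = 1 := by rw [← hdiag a, hm'aa]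
  -- trace of a commutator vanishes
  have htr : Matrix.trace m' = 0 := by
    rw [hm'def, Matrix.trace_sub, Matrix.trace_mul_comm, sub_self]
  have htr' : Matrix.trace m' = (n : ℝ) := by
    rw [Matrix.trace]
    have : ∀ i : Fin n, Matrix.diag m' i = 1 := by
      intro i; rw [Matrix.diag_apply, hdiag i, hbb]
    rw [Finset.sum_congr rfl fun i _ => this i]
    simp
  rw [htr'] at htr
  have : (n : ℝ) ≠ 0 := Nat.cast_ne_zero.mpr (by omega)
  exact this htr
end
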